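/- In a finite binary-action supermodular game, if y and z are both reachable from x by monotone improvement paths, then the componentwise supremum y ∨ z is also reachable from x by a monotone improvement path. -/

import Mathlib

variable {V : Type*} [Fintype V] [DecidableEq V]

/-- A configuration assigns each player an action in `{-1, +1}` (as integers). -/
def Conf (x : V → ℤ) : Prop := ∀ i, x i = 1 ∨ x i = -1

/-- Supermodularity (increasing differences) for a binary-action game with
utilities `u`. -/
def Supermodular (u : V → (V → ℤ) → ℝ) : Prop :=
  ∀ (i : V) (x y : V → ℤ), Conf x → Conf y → (∀ j, j ≠ i → y j ≤ x j) →
    u i (Function.update y i 1) - u i (Function.update y i (-1)) ≤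
      u i (Function.update x i 1) - u i (Function.update x i (-1))

/-- One step of an improvement path: a single player flips her action and
strictly increases her utility. -/
def ImpStep (u : V → (V → ℤ) → ℝ) (x y : V → ℤ) : Prop :=
  ∃ i : V, y = Function.update x i (-(x i)) ∧ u i x < u i y

/-- A monotone improvement step (the active player switches from -1 to +1). -/
def MonStep (u : V → (V → ℤ) → ℝ) (x y : V → ℤ) : Prop :=
  ImpStep u x y ∧ x ≤ y

/-- An anti-monotone improvement step (the active player switches from +1 to -1). -/
def AntiStep (u : V → (V → ℤ) → ℝ) (x y : V → ℤ) : Prop :=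
  ImpStep u x y ∧ y ≤ x

/-- `y` is reachable from `x` by an improvement path. -/
def ImpReach (u : V → (V → ℤ) → ℝ) : (V → ℤ) → (V → ℤ) → Prop :=
  Relation.ReflTransGen (ImpStep u)

/-- `y` is reachable from `x` by a monotone improvement path. -/
def MonReach (u : V → (V → ℤ) → ℝ) : (V → ℤ) → (V → ℤ) → Prop :=
  Relation.ReflTransGen (MonStep u)

/-- `y` is reachable from `x` by an anti-monotone improvement path. -/
def AntiReach (u : V → (V → ℤ) → ℝ) : (V → ℤ) → (V → ℤ) → Prop :=
  Relation.ReflTransGen (AntiStep u)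

/-- `x` is a (pure strategy Nash) equilibrium: no unilateral flip strictly
improves the deviator's utility. -/
def IsNash (u : V → (V → ℤ) → ℝ) (x : V → ℤ) : Prop :=
  ∀ i : V, u i (Function.update x i (-(x i))) ≤ u i x

open Classical in
/-- `fplus u x` is the componentwise supremum of the set of configurations
reachable from `x` by monotone improvement paths. -/
noncomputable def fplus (u : V → (V → ℤ) → ℝ) (x : V → ℤ) : V → ℤ :=
  fun i => if ∃ y, MonReach u x y ∧ y i = 1 then 1 else -1

open Classical in
/-- `fminus u x` is the componentwise infimum of the set of configurations
reachable from `x` by anti-monotone improvement paths. -/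
noncomputable def fminus (u : V → (V → ℤ) → ℝ) (x : V → ℤ) : V → ℤ :=
  fun i => if ∃ y, AntiReach u x y ∧ y i = -1 then -1 else 1

lemma conf_impStep {u : V → (V → ℤ) → ℝ} {a b : V → ℤ} (ha : Conf a)
    (h : ImpStep u a b) : Conf b := by
  obtain ⟨i, rfl, -⟩ := h
  intro j
  by_cases hj : j = i
  · subst hj; simp [Function.update]; rcases ha j with h | h <;> simp [h]
  · simpa [Function.update, hj] using ha j

lemma conf_monReach {u : V → (V → ℤ) → ℝ} {a b : V → ℤ} (ha : Conf a)
    (h : MonReach u a b) : Conf b := by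
  induction h with
  | refl => exact ha
  | tail _ hs ih => exact conf_impStep ih hs.1

lemma monReach_le {u : V → (V → ℤ) → ℝ} {a b : V → ℤ} (h : MonReach u a b) :
    a ≤ b := by
  induction h with
  | refl => exact le_refl _
  | tail _ hs ih => exact le_trans ih hs.2

lemma conf_sup {a b : V → ℤ} (ha : Conf a) (hb : Conf b) : Conf (a ⊔ b) := by
  intro i
  rcases ha i with h | h <;> rcases hb i with h' | h' <;>
    simp [Max.max, h, h'] <;> omega

lemma monStep_lift (u : V → (V → ℤ) → ℝ) (hsm : Supermodular u)
    {a b c : V → ℤ} (ha : Conf a) (hc : Conf c) (hab : MonStep u a b)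
    (hac : a ≤ c) : MonReach u c (c ⊔ b) := by
  obtain ⟨⟨i, hb, hu⟩, hle⟩ := hab
  have hai : a i = -1 := by
    rcases ha i with h | h
    · exfalso
      have := hle i
      rw [hb] at this
      simp [Function.update, h] at this
    · exact h
  have hbdef : b = Function.update a i 1 := by rw [hb, hai]; norm_num
  by_cases hci : c i = 1
  · have : c ⊔ b = c := by
      funext j
      by_cases hj : j = i
      · subst hj
        simp [Max.max, hbdef, Function.update, hci]
      · simp [Max.max, hbdef, Function.update, hj]
        exact fun h => le_antisymm (hac j) h
    rw [this]
    exact Relation.ReflTransGen.refl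
  · have hci' : c i = -1 := (hc i).resolve_left hci
    have hkey := hsm i c a hc ha (fun j _ => hac j)
    have haeq : Function.update a i (-1) = a := by
      funext j; by_cases hj : j = i
      · subst hj; simp [Function.update, hai]
      · simp [Function.update, hj]
    have hceq : Function.update c i (-1) = c := by
      funext j; by_cases hj : j = i
      · subst hj; simp [Function.update, hci']
      · simp [Function.update, hj]
    rw [haeq, hceq, ← hbdef] at hkey
    have himp : u i c < u i (Function.update c i 1) := by
      have : 0 < u i b - u i a := by linarith
      linarith
    have hstep : MonStep u c (Function.update c i 1) := by
      refine ⟨⟨i, ?_, himp⟩, ?_⟩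
      · rw [hci']; norm_num
      · intro j
        by_cases hj : j = i
        · subst hj; simp [Function.update, hci']
        · simp [Function.update, hj]
    have hsup : c ⊔ b = Function.update c i 1 := by
      funext j
      by_cases hj : j = i
      · subst hj
        simp [Max.max, hbdef, Function.update, hci']
      · simp [Max.max, hbdef, Function.update, hj]
        exact fun h => le_antisymm (hac j) h
    rw [hsup]
    exact Relation.ReflTransGen.single hstep

/-- if `y` and `z` are reachable from `x` by monotone improvement
paths, then so is `y ⊔ z`. -/
theorem monReach_sup (u : V → (V → ℤ) → ℝ) (hsm : Supermodular u)
    (x y z : V → ℤ) (hx : Conf x)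
    (hy : MonReach u x y) (hz : MonReach u x z) :
    MonReach u x (y ⊔ z) := by
  have hyz : MonReach u y (y ⊔ z) := by
    have hconf : ∀ {w}, MonReach u x w → Conf w := fun h => conf_monReach hx h
    induction hz with
    | refl =>
      have : y ⊔ x = y := sup_eq_left.mpr (monReach_le hy)
      rw [this]
      exact Relation.ReflTransGen.refl
    | @tail z z' hz hs ih =>
      have h1 : MonReach u (y ⊔ z) ((y ⊔ z) ⊔ z') :=
        monStep_lift u hsm (conf_monReach hx hz)
          (conf_sup (conf_monReach hx hy) (conf_monReach hx hz)) hs le_sup_right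
      have h2 : (y ⊔ z) ⊔ z' = y ⊔ z' := by
        rw [sup_assoc]
        congr 1
        exact sup_eq_right.mpr hs.2
      rw [h2] at h1
      exact ih.trans h1
  exact hy.trans hyz
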